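/- For any finite set A of nonzero real numbers, there is a subset A' ⊆ A with |A'| ≥ |A|/2 such that for every a ∈ A', |A + aA| ≫ |A|^{3/2}, where aA = {ab : b ∈ A}. -/

import Mathlib

open Finset

namespace ST14

open scoped Classical

noncomputable section

def rk (A : Finset ℝ) (x : ℝ) : ℕ := (A.filter (fun y => y < x)).card
def q (A : Finset ℝ) : ℕ := Nat.sqrt A.card + 1
def idx (A : Finset ℝ) (x : ℝ) : ℕ := rk A x / q A
def cells (A : Finset ℝ) : Finset (ℕ × ℕ) := (range (q A)) ×ˢ (range (q A))
def kap (A : Finset ℝ) (p : ℝ × ℝ) : ℕ × ℕ := (idx A p.1, idx A p.2)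
def cell (A : Finset ℝ) (c : ℕ × ℕ) : Finset (ℝ × ℝ) := (A ×ˢ A).filter (fun p => kap A p = c)
def fib (A : Finset ℝ) (a x : ℝ) : Finset (ℝ × ℝ) := (A ×ˢ A).filter (fun p => p.1 + a * p.2 = x)
def Im (A : Finset ℝ) (a : ℝ) : Finset ℝ := (A ×ˢ A).image (fun p => p.1 + a * p.2)
def fibc (A : Finset ℝ) (a x : ℝ) (c : ℕ × ℕ) : Finset (ℝ × ℝ) :=
  (fib A a x).filter (fun p => kap A p = c)
def F (A : Finset ℝ) (a : ℝ) : ℕ := ∑ x ∈ Im A a, (fib A a x).card ^ 2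

variable {A : Finset ℝ} {x y a : ℝ}

lemma q_pos : 0 < q A := Nat.succ_pos _

lemma rk_lt_rk (hx : x ∈ A) (hxy : x < y) : rk A x < rk A y := by
  apply Finset.card_lt_card
  constructor
  · intro z hz
    simp only [mem_filter] at hz ⊢
    exact ⟨hz.1, hz.2.trans hxy⟩
  · intro hsub
    have : x ∈ A.filter (fun y_1 => y_1 < y) := by simp [hx, hxy]
    have := hsub this
    simp at this

lemma rk_strictMonoOn : ∀ x ∈ A, ∀ y ∈ A, x < y → rk A x < rk A y :=
  fun x hx y _ h => rk_lt_rk hx h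

lemma idx_mono (hxy : x ≤ y) : idx A x ≤ idx A y := by
  apply Nat.div_le_div_right
  apply Finset.card_le_card
  intro z hz
  simp only [mem_filter] at hz ⊢
  exact ⟨hz.1, lt_of_lt_of_le hz.2 hxy⟩

lemma lt_of_idx_lt (hab : idx A x < idx A y) : x < y := by
  by_contra h
  exact absurd (idx_mono (not_lt.mp h)) (not_le.mpr hab)

lemma rk_lt_card (hx : x ∈ A) : rk A x < A.card := by
  apply Finset.card_lt_card
  constructor
  · exact Finset.filter_subset _ _
  · intro hsub
    have := hsub hx
    simp at this

lemma idx_lt (hx : x ∈ A) : idx A x < q A := by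
  rw [idx, Nat.div_lt_iff_lt_mul q_pos]
  calc rk A x < A.card := rk_lt_card hx
    _ < (Nat.sqrt A.card + 1) * (Nat.sqrt A.card + 1) := Nat.lt_succ_sqrt _
    _ = q A * q A := rfl

lemma block_card (i : ℕ) : (A.filter (fun x => idx A x = i)).card ≤ q A := by
  have h : ∀ x ∈ A.filter (fun x => idx A x = i), rk A x ∈ Finset.Ico (q A * i) (q A * i + q A) := by
    intro x hx
    simp only [mem_filter] at hx
    have hmod := Nat.div_add_mod (rk A x) (q A)
    have hlt := Nat.mod_lt (rk A x) (q_pos (A := A))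
    have h2 : rk A x / q A = i := hx.2
    rw [h2] at hmod
    simp only [Finset.mem_Ico]
    omega
  calc (A.filter (fun x => idx A x = i)).card
      ≤ (Finset.Ico (q A * i) (q A * i + q A)).card := by
        apply Finset.card_le_card_of_injOn (rk A) h
        intro u hu v hv huv
        simp only [coe_filter, Set.mem_setOf_eq] at hu hv
        by_contra hne
        rcases lt_or_gt_of_ne hne with h' | h'
        · exact absurd huv (Nat.ne_of_lt (rk_lt_rk hu.1 h'))
        · exact absurd huv.symm (Nat.ne_of_lt (rk_lt_rk hv.1 h'))
    _ = q A := by simp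

lemma cell_eq (c : ℕ × ℕ) :
    cell A c = (A.filter (fun x => idx A x = c.1)) ×ˢ (A.filter (fun x => idx A x = c.2)) := by
  rw [cell, ← Finset.filter_product]
  apply Finset.filter_congr
  intro p _
  simp [kap, Prod.ext_iff]

lemma cell_card (c : ℕ × ℕ) : (cell A c).card ≤ q A * q A := by
  rw [cell_eq, Finset.card_product]
  exact Nat.mul_le_mul (block_card c.1) (block_card c.2)

lemma kap_mem_cells {p : ℝ × ℝ} (hp : p ∈ A ×ˢ A) : kap A p ∈ cells A := by
  rw [Finset.mem_product] at hp
  simp only [cells, Finset.mem_product, Finset.mem_range]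
  exact ⟨idx_lt hp.1, idx_lt hp.2⟩

lemma sum_cell_card : ∑ c ∈ cells A, (cell A c).card = A.card ^ 2 := by
  have h := Finset.card_eq_sum_card_fiberwise (s := A ×ˢ A) (t := cells A) (f := kap A)
    (fun p hp => kap_mem_cells hp)
  rw [Finset.card_product] at h
  have : ∑ c ∈ cells A, (cell A c).card
      = ∑ c ∈ cells A, (Finset.filter (fun p => kap A p = c) (A ×ˢ A)).card := rfl
  rw [this, ← h]
  ring

lemma fib_subset (a x : ℝ) : fib A a x ⊆ A ×ˢ A := Finset.filter_subset _ _

lemma M_subset_cells (a x : ℝ) : (fib A a x).image (kap A) ⊆ cells A := by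
  intro c hc
  rw [Finset.mem_image] at hc
  obtain ⟨p, hp, rfl⟩ := hc
  exact kap_mem_cells (fib_subset a x hp)

lemma fib_card_eq (a x : ℝ) :
    (fib A a x).card = ∑ c ∈ (fib A a x).image (kap A), (fibc A a x c).card :=
  Finset.card_eq_sum_card_fiberwise (fun p hp => Finset.mem_image_of_mem _ hp)

lemma M_card (ha : a ≠ 0) (x : ℝ) :
    ((fib A a x).image (kap A)).card ≤ 2 * Nat.sqrt A.card + 1 := by
  set s := Nat.sqrt A.card with hs
  -- every cell index is ≤ s
  have hbound : ∀ c ∈ (fib A a x).image (kap A), c.1 ≤ s ∧ c.2 ≤ s := by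
    intro c hc
    have := M_subset_cells a x hc
    simp only [cells, Finset.mem_product, Finset.mem_range, q] at this
    omega
  -- order relation between witnesses
  have key : ∀ p ∈ fib A a x, ∀ p' ∈ fib A a x, idx A p.1 < idx A p'.1 →
      (0 < a → idx A p'.2 ≤ idx A p.2) ∧ (a < 0 → idx A p.2 ≤ idx A p'.2) := by
    intro p hp p' hp' hlt
    simp only [fib, Finset.mem_filter] at hp hp'
    have h1 : p.1 < p'.1 := lt_of_idx_lt hlt
    have heq : p.1 + a * p.2 = p'.1 + a * p'.2 := by rw [hp.2, hp'.2]
    constructor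
    · intro hapos
      have : p'.2 < p.2 := by nlinarith
      exact idx_mono this.le
    · intro haneg
      have : p.2 < p'.2 := by nlinarith
      exact idx_mono this.le
  rcases ha.lt_or_gt with haneg | hapos
  · -- a < 0 : use c.1 + c.2
    have hcard : ((fib A a x).image (kap A)).card ≤ (Finset.range (2 * s + 1)).card := by
      apply Finset.card_le_card_of_injOn (fun c => c.1 + c.2)
        (fun c hc => by
          have := hbound c hc
          simp only [Finset.mem_coe, Finset.mem_range]
          omega)
      intro c hc c' hc' hcc
      simp only [Finset.coe_image, Set.mem_image, Finset.mem_coe] at hc hc'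
      obtain ⟨p, hp, rfl⟩ := hc
      obtain ⟨p', hp', rfl⟩ := hc'
      simp only [kap] at hcc ⊢
      rcases lt_trichotomy (idx A p.1) (idx A p'.1) with h | h | h
      · have := ((key p hp p' hp' h).2 haneg)
        omega
      · simp only [kap, Prod.ext_iff]
        omega
      · have := ((key p' hp' p hp h).2 haneg)
        omega
    simpa using hcard
  · -- 0 < a : use c.1 + (s - c.2)
    have hcard : ((fib A a x).image (kap A)).card ≤ (Finset.range (2 * s + 1)).card := by
      apply Finset.card_le_card_of_injOn (fun c => c.1 + (s - c.2))
        (fun c hc => by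
          have := hbound c hc
          simp only [Finset.mem_coe, Finset.mem_range]
          omega)
      intro c hc c' hc' hcc
      have hb := hbound c (by exact hc)
      have hb' := hbound c' (by exact hc')
      simp only [Finset.coe_image, Set.mem_image, Finset.mem_coe] at hc hc'
      obtain ⟨p, hp, rfl⟩ := hc
      obtain ⟨p', hp', rfl⟩ := hc'
      simp only [kap] at hcc hb hb' ⊢
      rcases lt_trichotomy (idx A p.1) (idx A p'.1) with h | h | h
      · have := ((key p hp p' hp' h).1 hapos)
        omega
      · simp only [kap, Prod.ext_iff]
        omega
      · have := ((key p' hp' p hp h).1 hapos)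
        omega
    simpa using hcard

lemma fib_sq_le (ha : a ≠ 0) (x : ℝ) :
    (fib A a x).card ^ 2 ≤ (2 * Nat.sqrt A.card + 1) * ∑ c ∈ cells A, (fibc A a x c).card ^ 2 := by
  calc (fib A a x).card ^ 2
      = (∑ c ∈ (fib A a x).image (kap A), (fibc A a x c).card) ^ 2 := by rw [← fib_card_eq]
    _ ≤ ((fib A a x).image (kap A)).card *
        ∑ c ∈ (fib A a x).image (kap A), (fibc A a x c).card ^ 2 :=
        sq_sum_le_card_mul_sum_sq
    _ ≤ (2 * Nat.sqrt A.card + 1) * ∑ c ∈ cells A, (fibc A a x c).card ^ 2 := by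
        apply Nat.mul_le_mul (M_card ha x)
        exact Finset.sum_le_sum_of_subset (M_subset_cells a x)

def Pairs (A : Finset ℝ) (a : ℝ) (c : ℕ × ℕ) : Finset ((ℝ × ℝ) × (ℝ × ℝ)) :=
  ((cell A c) ×ˢ (cell A c)).filter (fun pp => pp.1.1 + a * pp.1.2 = pp.2.1 + a * pp.2.2)

lemma fibc_eq (a x : ℝ) (c : ℕ × ℕ) :
    fibc A a x c = (cell A c).filter (fun p => p.1 + a * p.2 = x) := by
  rw [fibc, fib, cell, Finset.filter_filter, Finset.filter_filter]
  apply Finset.filter_congr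
  intro p _
  tauto

lemma cell_subset (c : ℕ × ℕ) : cell A c ⊆ A ×ˢ A := Finset.filter_subset _ _

lemma sum_fibc_sq (a : ℝ) (c : ℕ × ℕ) :
    ∑ x ∈ Im A a, (fibc A a x c).card ^ 2 = (Pairs A a c).card := by
  have hmaps : ∀ pp ∈ Pairs A a c, pp.1.1 + a * pp.1.2 ∈ Im A a := by
    intro pp hpp
    simp only [Pairs, Finset.mem_filter, Finset.mem_product] at hpp
    exact Finset.mem_image_of_mem _ (cell_subset c hpp.1.1)
  rw [Finset.card_eq_sum_card_fiberwise hmaps]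
  apply Finset.sum_congr rfl
  intro x _
  have hsplit : (Pairs A a c).filter (fun pp => pp.1.1 + a * pp.1.2 = x)
      = ((cell A c).filter (fun p => p.1 + a * p.2 = x)) ×ˢ
        ((cell A c).filter (fun p => p.1 + a * p.2 = x)) := by
    ext pp
    simp only [Pairs, Finset.mem_filter, Finset.mem_product]
    constructor
    · rintro ⟨⟨⟨h1, h2⟩, h3⟩, h4⟩
      exact ⟨⟨h1, h4⟩, ⟨h2, by rw [← h3, h4]⟩⟩
    · rintro ⟨⟨h1, h4⟩, ⟨h2, h5⟩⟩
      exact ⟨⟨⟨h1, h2⟩, by rw [h4, h5]⟩, h4⟩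
  rw [hsplit, Finset.card_product, fibc_eq]
  ring

def Big (A : Finset ℝ) (c : ℕ × ℕ) : Finset (ℝ × ((ℝ × ℝ) × (ℝ × ℝ))) :=
  (A ×ˢ ((cell A c) ×ˢ (cell A c))).filter
    (fun t => t.2.1 ≠ t.2.2 ∧ t.2.1.1 + t.1 * t.2.1.2 = t.2.2.1 + t.1 * t.2.2.2)

lemma big_card_eq (c : ℕ × ℕ) :
    (Big A c).card = ∑ a ∈ A, ((Pairs A a c).filter (fun pp => pp.1 ≠ pp.2)).card := by
  have hmaps : ∀ t ∈ Big A c, t.1 ∈ A := by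
    intro t ht
    simp only [Big, Finset.mem_filter, Finset.mem_product] at ht
    exact ht.1.1
  rw [Finset.card_eq_sum_card_fiberwise hmaps]
  apply Finset.sum_congr rfl
  intro a ha
  apply Finset.card_bij (fun t _ => t.2)
  · intro t ht
    simp only [Big, Finset.mem_filter, Finset.mem_product] at ht
    simp only [Pairs, Finset.mem_filter, Finset.mem_product]
    obtain ⟨⟨⟨h1, h2, h3⟩, h4, h5⟩, h6⟩ := ht
    subst h6
    exact ⟨⟨⟨h2, h3⟩, h5⟩, h4⟩
  · intro t ht t' ht' h
    simp only [Big, Finset.mem_filter, Finset.mem_product] at ht ht'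
    exact Prod.ext (ht.2.trans ht'.2.symm) h
  · intro pp hpp
    simp only [Pairs, Finset.mem_filter, Finset.mem_product] at hpp
    refine ⟨(a, pp), ?_, rfl⟩
    simp only [Big, Finset.mem_filter, Finset.mem_product]
    tauto

lemma big_card_le (c : ℕ × ℕ) : (Big A c).card ≤ (cell A c).card ^ 2 := by
  have : ((cell A c) ×ˢ (cell A c)).card = (cell A c).card ^ 2 := by
    rw [Finset.card_product]; ring
  rw [← this]
  apply Finset.card_le_card_of_injOn (fun t => t.2)
  · intro t ht
    simp only [Finset.mem_coe, Big, Finset.mem_filter, Finset.mem_product] at ht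
    simp only [Finset.mem_coe, Finset.mem_product]
    exact ht.1.2
  · intro t ht t' ht' h
    simp only [Finset.mem_coe, Big, Finset.mem_filter, Finset.mem_product] at ht ht'
    obtain ⟨⟨_, _⟩, hne, heq⟩ := ht
    obtain ⟨⟨_, _⟩, hne', heq'⟩ := ht'
    simp only at h
    -- t.2 = t'.2 : show t.1 = t'.1
    apply Prod.ext _ h
    rw [← h] at heq'
    -- heq : p1 + t.1 p2 = q1 + t.1 q2 ; heq' with t'.1, same points, p ≠ q
    by_contra hta
    have h2 : t.2.1.2 ≠ t.2.2.2 := by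
      intro h22
      apply hne
      have : t.2.1.1 = t.2.2.1 := by rw [h22] at heq; linarith
      exact Prod.ext this h22
    apply hta
    have : (t.1 - t'.1) * (t.2.1.2 - t.2.2.2) = 0 := by linarith [heq, heq']
    rcases mul_eq_zero.mp this with h' | h'
    · linarith
    · exact absurd (by linarith : t.2.1.2 = t.2.2.2) h2

lemma diag_card_le (a : ℝ) (c : ℕ × ℕ) :
    ((Pairs A a c).filter (fun pp => pp.1 = pp.2)).card ≤ (cell A c).card := by
  apply Finset.card_le_card_of_injOn (fun pp => pp.1)
  · intro pp hpp
    simp only [Finset.mem_coe, Finset.mem_filter, Pairs, Finset.mem_product] at hpp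
    exact hpp.1.1.1
  · intro pp hpp pp' hpp' h
    simp only [Finset.mem_coe, Finset.mem_filter] at hpp hpp'
    exact Prod.ext h (by rw [← hpp.2, ← hpp'.2]; exact h)

lemma sum_sum_fibc_sq (c : ℕ × ℕ) :
    ∑ a ∈ A, ∑ x ∈ Im A a, (fibc A a x c).card ^ 2
      ≤ (cell A c).card ^ 2 + A.card * (cell A c).card := by
  calc ∑ a ∈ A, ∑ x ∈ Im A a, (fibc A a x c).card ^ 2
      = ∑ a ∈ A, (Pairs A a c).card := by
        exact Finset.sum_congr rfl (fun a _ => sum_fibc_sq a c)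
    _ = ∑ a ∈ A, (((Pairs A a c).filter (fun pp => pp.1 = pp.2)).card
          + ((Pairs A a c).filter (fun pp => ¬ pp.1 = pp.2)).card) := by
        exact Finset.sum_congr rfl (fun a _ =>
          (Finset.card_filter_add_card_filter_not _).symm)
    _ ≤ ∑ a ∈ A, ((cell A c).card + ((Pairs A a c).filter (fun pp => ¬ pp.1 = pp.2)).card) := by
        apply Finset.sum_le_sum
        intro a _
        exact Nat.add_le_add_right (diag_card_le a c) _
    _ = A.card * (cell A c).card + (Big A c).card := by
        rw [Finset.sum_add_distrib, Finset.sum_const, smul_eq_mul, big_card_eq]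
    _ ≤ A.card * (cell A c).card + (cell A c).card ^ 2 := by
        exact Nat.add_le_add_left (big_card_le c) _
    _ = (cell A c).card ^ 2 + A.card * (cell A c).card := by ring

lemma total (h0 : (0:ℝ) ∉ A) :
    ∑ a ∈ A, F A a ≤ (2 * Nat.sqrt A.card + 1) * (A.card ^ 2 * (q A ^ 2 + A.card)) := by
  calc ∑ a ∈ A, F A a
      ≤ ∑ a ∈ A, ((2 * Nat.sqrt A.card + 1) *
          ∑ x ∈ Im A a, ∑ c ∈ cells A, (fibc A a x c).card ^ 2) := by
        apply Finset.sum_le_sum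
        intro a ha
        have ha0 : a ≠ 0 := fun h => h0 (h ▸ ha)
        rw [Finset.mul_sum]
        exact Finset.sum_le_sum (fun x _ => fib_sq_le ha0 x)
    _ = (2 * Nat.sqrt A.card + 1) *
          ∑ c ∈ cells A, ∑ a ∈ A, ∑ x ∈ Im A a, (fibc A a x c).card ^ 2 := by
        rw [← Finset.mul_sum]
        congr 1
        rw [Finset.sum_comm]
        apply Finset.sum_congr rfl
        intro a _
        exact Finset.sum_comm
    _ ≤ (2 * Nat.sqrt A.card + 1) *
          ∑ c ∈ cells A, ((cell A c).card ^ 2 + A.card * (cell A c).card) := by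
        exact Nat.mul_le_mul_left _ (Finset.sum_le_sum (fun c _ => sum_sum_fibc_sq c))
    _ ≤ (2 * Nat.sqrt A.card + 1) *
          ∑ c ∈ cells A, ((q A ^ 2 + A.card) * (cell A c).card) := by
        apply Nat.mul_le_mul_left
        apply Finset.sum_le_sum
        intro c _
        have h1 : (cell A c).card ^ 2 ≤ q A ^ 2 * (cell A c).card := by
          have := cell_card (A := A) c
          calc (cell A c).card ^ 2 = (cell A c).card * (cell A c).card := sq _
            _ ≤ (q A * q A) * (cell A c).card := Nat.mul_le_mul_right _ this
            _ = q A ^ 2 * (cell A c).card := by ring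
        calc (cell A c).card ^ 2 + A.card * (cell A c).card
            ≤ q A ^ 2 * (cell A c).card + A.card * (cell A c).card := Nat.add_le_add_right h1 _
          _ = (q A ^ 2 + A.card) * (cell A c).card := by ring
    _ = (2 * Nat.sqrt A.card + 1) * (A.card ^ 2 * (q A ^ 2 + A.card)) := by
        rw [← Finset.mul_sum, sum_cell_card]
        ring

lemma cs_im (a : ℝ) : (A.card ^ 2) ^ 2 ≤ (Im A a).card * F A a := by
  have h : (A ×ˢ A).card = ∑ x ∈ Im A a, (fib A a x).card :=
    Finset.card_eq_sum_card_fiberwise (fun p hp => Finset.mem_image_of_mem _ hp)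
  rw [Finset.card_product] at h
  calc (A.card ^ 2) ^ 2 = (∑ x ∈ Im A a, (fib A a x).card) ^ 2 := by rw [← h]; ring
    _ ≤ (Im A a).card * ∑ x ∈ Im A a, (fib A a x).card ^ 2 := sq_sum_le_card_mul_sum_sq
    _ = (Im A a).card * F A a := rfl

end

end ST14

open Finset

theorem stmt14 : ∃ c > (0:ℝ), ∀ A : Finset ℝ, (0:ℝ) ∉ A →
    ∃ A' ⊆ A, (A.card : ℝ) / 2 ≤ (A'.card : ℝ) ∧ ∀ a ∈ A',
      c * Real.sqrt ((A.card : ℝ)^3) ≤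
        (((A ×ˢ A).image (fun p => p.1 + a * p.2)).card : ℝ) := by
  classical
  refine ⟨1/30, by norm_num, ?_⟩
  intro A h0
  rcases A.eq_empty_or_nonempty with rfl | hne
  · exact ⟨∅, Finset.Subset.refl _, by simp, by simp⟩
  have hn : 1 ≤ A.card := Finset.card_pos.mpr hne
  set n := A.card with hndef
  set s := Nat.sqrt n with hsdef
  have hs1 : 1 ≤ s := Nat.sqrt_pos.mpr hn
  have hss : s * s ≤ n := Nat.sqrt_le n
  -- natural number total bound
  have htotal : ∑ a ∈ A, ST14.F A a ≤ 15 * s * n ^ 3 := by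
    have h2 : ST14.q A ^ 2 + n ≤ 5 * n := by
      have hq : ST14.q A ≤ 2 * s := by
        rw [ST14.q, ← hndef]
        omega
      have : ST14.q A ^ 2 ≤ 4 * n := by
        calc ST14.q A ^ 2 ≤ (2 * s) ^ 2 := Nat.pow_le_pow_left hq 2
          _ = 4 * (s * s) := by ring
          _ ≤ 4 * n := by omega
      omega
    calc ∑ a ∈ A, ST14.F A a ≤ (2 * s + 1) * (n ^ 2 * (ST14.q A ^ 2 + n)) := ST14.total h0
      _ ≤ (3 * s) * (n ^ 2 * (5 * n)) := by
          apply Nat.mul_le_mul (by omega)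
          exact Nat.mul_le_mul_left _ h2
      _ = 15 * s * n ^ 3 := by ring
  -- real arithmetic
  have hnR : (1:ℝ) ≤ (n:ℝ) := by exact_mod_cast hn
  have hsqn : (0:ℝ) < Real.sqrt n := Real.sqrt_pos.mpr (by linarith)
  have hsr : (s:ℝ) ≤ Real.sqrt n := by
    rw [Real.le_sqrt (by positivity) (by positivity)]
    have : ((s * s : ℕ) : ℝ) ≤ (n:ℝ) := by exact_mod_cast hss
    calc ((s:ℝ))^2 = ((s*s : ℕ) : ℝ) := by push_cast; ring
      _ ≤ (n:ℝ) := this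
  set T : ℝ := 30 * Real.sqrt n * (n:ℝ) ^ 2 with hTdef
  have hTpos : 0 < T := by positivity
  set A' := A.filter (fun a => (ST14.F A a : ℝ) ≤ T) with hA'def
  refine ⟨A', Finset.filter_subset _ _, ?_, ?_⟩
  · -- cardinality bound
    set B := A.filter (fun a => ¬ (ST14.F A a : ℝ) ≤ T) with hBdef
    have hsplit : A'.card + B.card = n :=
      Finset.card_filter_add_card_filter_not _
    have hsumA : (∑ a ∈ A, (ST14.F A a : ℝ)) ≤ 15 * Real.sqrt n * (n:ℝ) ^ 3 := by
      have h1 : (∑ a ∈ A, (ST14.F A a : ℝ)) = ((∑ a ∈ A, ST14.F A a : ℕ) : ℝ) := by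
        push_cast; rfl
      rw [h1]
      calc ((∑ a ∈ A, ST14.F A a : ℕ) : ℝ) ≤ ((15 * s * n ^ 3 : ℕ) : ℝ) := by exact_mod_cast htotal
        _ = 15 * (s:ℝ) * (n:ℝ) ^ 3 := by push_cast; ring
        _ ≤ 15 * Real.sqrt n * (n:ℝ) ^ 3 := by
            have h3 : (0:ℝ) ≤ (n:ℝ)^3 := by positivity
            nlinarith [hsr, h3]
    have hBsum : (B.card : ℝ) * T ≤ ∑ a ∈ A, (ST14.F A a : ℝ) := by
      have h1 : (B.card : ℝ) * T = B.card • T := by simp [nsmul_eq_mul]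
      rw [h1]
      calc B.card • T ≤ ∑ a ∈ B, (ST14.F A a : ℝ) := by
            apply Finset.card_nsmul_le_sum
            intro a ha
            rw [hBdef, Finset.mem_filter] at ha
            exact (not_le.mp ha.2).le
        _ ≤ ∑ a ∈ A, (ST14.F A a : ℝ) := by
            apply Finset.sum_le_sum_of_subset_of_nonneg (Finset.filter_subset _ _)
            intro a _ _
            positivity
    have hB : (B.card : ℝ) ≤ (n:ℝ) / 2 := by
      have h2 : (B.card : ℝ) * T ≤ ((n:ℝ)/2) * T := by
        calc (B.card : ℝ) * T ≤ 15 * Real.sqrt n * (n:ℝ)^3 := le_trans hBsum hsumA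
          _ = ((n:ℝ)/2) * T := by rw [hTdef]; ring
      exact le_of_mul_le_mul_right h2 hTpos
    have : (A'.card : ℝ) + (B.card : ℝ) = (n : ℝ) := by exact_mod_cast hsplit
    linarith
  · -- main bound
    intro a ha
    rw [hA'def, Finset.mem_filter] at ha
    have hcs : ((n ^ 2 : ℕ) ^ 2 : ℝ) ≤ ((ST14.Im A a).card : ℝ) * (ST14.F A a : ℝ) := by
      exact_mod_cast ST14.cs_im (A := A) a
    have hF : (ST14.F A a : ℝ) ≤ T := ha.2
    have hIm : ((ST14.Im A a).card : ℝ) ≥ 0 := by positivity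
    have hmain : (n:ℝ)^4 ≤ ((ST14.Im A a).card : ℝ) * T := by
      calc (n:ℝ)^4 = ((n ^ 2 : ℕ) ^ 2 : ℝ) := by push_cast; ring
        _ ≤ ((ST14.Im A a).card : ℝ) * (ST14.F A a : ℝ) := hcs
        _ ≤ ((ST14.Im A a).card : ℝ) * T := by
            apply mul_le_mul_of_nonneg_left hF hIm
    have hgoal : (1/30 : ℝ) * Real.sqrt ((n:ℝ)^3) ≤ ((ST14.Im A a).card : ℝ) := by
      have hsqrt3 : Real.sqrt ((n:ℝ)^3) = (n:ℝ) * Real.sqrt n := by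
        rw [show ((n:ℝ))^3 = ((n:ℝ) * Real.sqrt n)^2 by
          have := Real.mul_self_sqrt (le_trans zero_le_one hnR)
          nlinarith]
        exact Real.sqrt_sq (by positivity)
      rw [hsqrt3]
      have hms : Real.sqrt n * Real.sqrt n = (n:ℝ) := Real.mul_self_sqrt (by linarith)
      rw [hTdef] at hmain
      have hPpos : (0:ℝ) < 30 * Real.sqrt n * (n:ℝ)^2 := by positivity
      rw [← mul_le_mul_iff_of_pos_right hPpos]
      calc 1/30 * ((n:ℝ) * Real.sqrt n) * (30 * Real.sqrt n * (n:ℝ)^2) = (n:ℝ)^4 := by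
            linear_combination ((n:ℝ)^3) * hms
        _ ≤ ((ST14.Im A a).card : ℝ) * (30 * Real.sqrt n * (n:ℝ)^2) := hmain
    exact hgoal
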